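/- For any bipartite pure state |ψ⟩ ∈ H^A ⊗ H^{BC} (where H^{BC} = H^B ⊗ H^C), one has 1 + Tr((ρ^{BC})²) ≥ Tr((ρ^B)²) + Tr((ρ^C)²), and consequently the tripartite tangle τ^{(3)}(|ψ⟩) = 3 − Tr((ρ^A)²) − Tr((ρ^B)²) − Tr((ρ^C)²) satisfies τ^{(3)}(|ψ⟩) ≥ τ^{(2)}(|ψ⟩^{A|BC}) = 2 − Tr((ρ^A)²) − Tr((ρ^{BC})²). -/

import Mathlib

open ComplexOrder Matrix

noncomputable def ptraceB {A B : Type*} [Fintype B] (ρ : Matrix (A × B) (A × B) ℂ) :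
    Matrix A A ℂ := Matrix.of fun a a' => ∑ b, ρ (a, b) (a', b)

noncomputable def ptraceA {A B : Type*} [Fintype A] (ρ : Matrix (A × B) (A × B) ℂ) :
    Matrix B B ℂ := Matrix.of fun b b' => ∑ a, ρ (a, b) (a, b')

noncomputable def outerProd {n : Type*} (ψ : n → ℂ) : Matrix n n ℂ :=
  Matrix.vecMulVec ψ (star ψ)

noncomputable def purity {n : Type*} [Fintype n] (σ : Matrix n n ℂ) : ℝ :=
  ((σ * σ).trace).re

set_option linter.unusedSectionVars false

namespace Stmt7Aux

variable {A B C : Type*} [Fintype A] [Fintype B] [Fintype C]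

noncomputable def S6 (g : A → A → B → B → C → C → ℂ) : ℂ :=
  ∑ a, ∑ a', ∑ b, ∑ b', ∑ c, ∑ c', g a a' b b' c c'

lemma S6_single (g : A → A → B → B → C → C → ℂ) :
    S6 g = ∑ x : A × A × B × B × C × C,
      g x.1 x.2.1 x.2.2.1 x.2.2.2.1 x.2.2.2.2.1 x.2.2.2.2.2 := by
  simp [S6, Fintype.sum_prod_type]

lemma S6_swapB (g : A → A → B → B → C → C → ℂ) :
    S6 (fun a a' b b' c c' => g a a' b' b c c') = S6 g := by
  unfold S6
  exact Finset.sum_congr rfl fun _ _ => Finset.sum_congr rfl fun _ _ => Finset.sum_comm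

lemma S6_swapC (g : A → A → B → B → C → C → ℂ) :
    S6 (fun a a' b b' c c' => g a a' b b' c' c) = S6 g := by
  unfold S6
  exact Finset.sum_congr rfl fun _ _ => Finset.sum_congr rfl fun _ _ =>
    Finset.sum_congr rfl fun _ _ => Finset.sum_congr rfl fun _ _ => Finset.sum_comm

lemma S6_congr (g h : A → A → B → B → C → C → ℂ)
    (H : ∀ a a' b b' c c', g a a' b b' c c' = h a a' b b' c c') : S6 g = S6 h := by
  unfold S6; simp only [H]

lemma S6_neg (g : A → A → B → B → C → C → ℂ) :
    S6 (fun a a' b b' c c' => - g a a' b b' c c') = - S6 g := by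
  simp [S6]

lemma S6_comb (g1 g2 g3 g4 : A → A → B → B → C → C → ℂ) :
    S6 (fun a a' b b' c c' => g1 a a' b b' c c' - g2 a a' b b' c c'
        - g3 a a' b b' c c' + g4 a a' b b' c c')
      = S6 g1 - S6 g2 - S6 g3 + S6 g4 := by
  simp [S6, Finset.sum_add_distrib, Finset.sum_sub_distrib]

/-- the antisymmetrized amplitude -/
noncomputable def Tt (ψ : A × (B × C) → ℂ) (a a' : A) (b b' : B) (c c' : C) : ℂ :=
  ψ (a,(b,c)) * ψ (a',(b',c')) - ψ (a,(b',c)) * ψ (a',(b,c'))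
    - ψ (a,(b,c')) * ψ (a',(b',c)) + ψ (a,(b',c')) * ψ (a',(b,c))

lemma Tt_swapB (ψ : A × (B × C) → ℂ) (a a' : A) (b b' : B) (c c' : C) :
    Tt ψ a a' b' b c c' = - Tt ψ a a' b b' c c' := by
  unfold Tt; ring

lemma Tt_swapC (ψ : A × (B × C) → ℂ) (a a' : A) (b b' : B) (c c' : C) :
    Tt ψ a a' b b' c' c = - Tt ψ a a' b b' c c' := by
  unfold Tt; ring

/- reindexing equivalences -/
def eN : (A × A × B × B × C × C) ≃ (A × B × C × A × B × C) where
  toFun x := (x.2.1, x.2.2.2.1, x.2.2.2.2.2, x.1, x.2.2.1, x.2.2.2.2.1)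
  invFun y := (y.2.2.2.1, y.1, y.2.2.2.2.1, y.2.1, y.2.2.2.2.2, y.2.2.1)
  left_inv _ := rfl
  right_inv _ := rfl

def eB : (A × A × B × B × C × C) ≃ (B × B × C × A × C × A) where
  toFun x := (x.2.2.1, x.2.2.2.1, x.2.2.2.2.2, x.2.1, x.2.2.2.2.1, x.1)
  invFun y := (y.2.2.2.2.2, y.2.2.2.1, y.1, y.2.1, y.2.2.2.2.1, y.2.2.1)
  left_inv _ := rfl
  right_inv _ := rfl

def eC : (A × A × B × B × C × C) ≃ (C × C × B × A × B × A) where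
  toFun x := (x.2.2.2.2.1, x.2.2.2.2.2, x.2.2.2.1, x.2.1, x.2.2.1, x.1)
  invFun y := (y.2.2.2.2.2, y.2.2.2.1, y.2.2.2.2.1, y.2.2.1, y.1, y.2.1)
  left_inv _ := rfl
  right_inv _ := rfl

def eBC : (A × A × B × B × C × C) ≃ (B × C × B × C × A × A) where
  toFun x := (x.2.2.1, x.2.2.2.2.1, x.2.2.2.1, x.2.2.2.2.2, x.2.1, x.1)
  invFun y := (y.2.2.2.2.2, y.2.2.2.2.1, y.1, y.2.2.1, y.2.1, y.2.2.2.1)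
  left_inv _ := rfl
  right_inv _ := rfl

/- canonical sum identifications -/
lemma canonN (ψ : A × (B × C) → ℂ) :
    (∑ x, ψ x * star (ψ x)) ^ 2
      = S6 (fun a a' b b' c c' =>
          ψ (a,(b,c)) * star (ψ (a,(b,c))) * (ψ (a',(b',c')) * star (ψ (a',(b',c'))))) := by
  have h2 : S6 (fun (a a' : A) (b b' : B) (c c' : C) =>
        ψ (a,(b,c)) * star (ψ (a,(b,c))) * (ψ (a',(b',c')) * star (ψ (a',(b',c')))))
      = ∑ z : A × B × C × A × B × C,
        ψ (z.2.2.2.1, z.2.2.2.2.1, z.2.2.2.2.2) * star (ψ (z.2.2.2.1, z.2.2.2.2.1, z.2.2.2.2.2)) *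
          (ψ (z.1, z.2.1, z.2.2.1) * star (ψ (z.1, z.2.1, z.2.2.1))) :=
    (S6_single _).trans (Fintype.sum_equiv eN _ _ (fun _ => rfl))
  rw [h2]
  simp only [sq, Fintype.sum_prod_type, Finset.sum_mul, Finset.mul_sum]

lemma canonBC (ψ : A × (B × C) → ℂ) :
    ((ptraceA (outerProd ψ)) * (ptraceA (outerProd ψ))).trace
      = S6 (fun a a' b b' c c' =>
          ψ (a,(b,c)) * star (ψ (a,(b',c'))) * (ψ (a',(b',c')) * star (ψ (a',(b,c))))) := by
  have h2 : S6 (fun (a a' : A) (b b' : B) (c c' : C) =>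
        ψ (a,(b,c)) * star (ψ (a,(b',c'))) * (ψ (a',(b',c')) * star (ψ (a',(b,c)))))
      = ∑ z : B × C × B × C × A × A,
        ψ (z.2.2.2.2.2, z.1, z.2.1) * star (ψ (z.2.2.2.2.2, z.2.2.1, z.2.2.2.1)) *
          (ψ (z.2.2.2.2.1, z.2.2.1, z.2.2.2.1) * star (ψ (z.2.2.2.2.1, z.1, z.2.1))) :=
    (S6_single _).trans (Fintype.sum_equiv eBC _ _ (fun _ => rfl))
  rw [h2]
  simp only [Matrix.trace, Matrix.diag, Matrix.mul_apply, ptraceA, outerProd,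
    Matrix.vecMulVec_apply, Matrix.of_apply, Pi.star_apply, Fintype.sum_prod_type,
    Finset.sum_mul, Finset.mul_sum]

lemma canonB (ψ : A × (B × C) → ℂ) :
    ((ptraceB (ptraceA (outerProd ψ))) * (ptraceB (ptraceA (outerProd ψ)))).trace
      = S6 (fun a a' b b' c c' =>
          ψ (a,(b,c)) * star (ψ (a,(b',c))) * (ψ (a',(b',c')) * star (ψ (a',(b,c'))))) := by
  have h2 : S6 (fun (a a' : A) (b b' : B) (c c' : C) =>
        ψ (a,(b,c)) * star (ψ (a,(b',c))) * (ψ (a',(b',c')) * star (ψ (a',(b,c')))))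
      = ∑ z : B × B × C × A × C × A,
        ψ (z.2.2.2.2.2, z.1, z.2.2.2.2.1) * star (ψ (z.2.2.2.2.2, z.2.1, z.2.2.2.2.1)) *
          (ψ (z.2.2.2.1, z.2.1, z.2.2.1) * star (ψ (z.2.2.2.1, z.1, z.2.2.1))) :=
    (S6_single _).trans (Fintype.sum_equiv eB _ _ (fun _ => rfl))
  rw [h2]
  simp only [Matrix.trace, Matrix.diag, Matrix.mul_apply, ptraceA, ptraceB, outerProd,
    Matrix.vecMulVec_apply, Matrix.of_apply, Pi.star_apply, Fintype.sum_prod_type,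
    Finset.sum_mul, Finset.mul_sum]

lemma canonC (ψ : A × (B × C) → ℂ) :
    ((ptraceA (ptraceA (outerProd ψ))) * (ptraceA (ptraceA (outerProd ψ)))).trace
      = S6 (fun a a' b b' c c' =>
          ψ (a,(b,c)) * star (ψ (a,(b,c'))) * (ψ (a',(b',c')) * star (ψ (a',(b',c))))) := by
  have h2 : S6 (fun (a a' : A) (b b' : B) (c c' : C) =>
        ψ (a,(b,c)) * star (ψ (a,(b,c'))) * (ψ (a',(b',c')) * star (ψ (a',(b',c)))))
      = ∑ z : C × C × B × A × B × A,
        ψ (z.2.2.2.2.2, z.2.2.2.2.1, z.1) * star (ψ (z.2.2.2.2.2, z.2.2.2.2.1, z.2.1)) *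
          (ψ (z.2.2.2.1, z.2.2.1, z.2.1) * star (ψ (z.2.2.2.1, z.2.2.1, z.1))) :=
    (S6_single _).trans (Fintype.sum_equiv eC _ _ (fun _ => rfl))
  rw [h2]
  simp only [Matrix.trace, Matrix.diag, Matrix.mul_apply, ptraceA, ptraceB, outerProd,
    Matrix.vecMulVec_apply, Matrix.of_apply, Pi.star_apply, Fintype.sum_prod_type,
    Finset.sum_mul, Finset.mul_sum]

/-- the key identity -/
theorem key (ψ : A × (B × C) → ℂ) :
    S6 (fun a a' b b' c c' => Tt ψ a a' b b' c c' * star (Tt ψ a a' b b' c c'))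
      = 4 * ((∑ x, ψ x * star (ψ x)) ^ 2
          + ((ptraceA (outerProd ψ)) * (ptraceA (outerProd ψ))).trace
          - ((ptraceB (ptraceA (outerProd ψ))) * (ptraceB (ptraceA (outerProd ψ)))).trace
          - ((ptraceA (ptraceA (outerProd ψ))) * (ptraceA (ptraceA (outerProd ψ)))).trace) := by
  set A1T := fun (a a' : A) (b b' : B) (c c' : C) =>
    ψ (a,(b,c)) * ψ (a',(b',c')) * star (Tt ψ a a' b b' c c') with hA1T
  set A2T := fun (a a' : A) (b b' : B) (c c' : C) =>
    ψ (a,(b',c)) * ψ (a',(b,c')) * star (Tt ψ a a' b b' c c') with hA2T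
  set A3T := fun (a a' : A) (b b' : B) (c c' : C) =>
    ψ (a,(b,c')) * ψ (a',(b',c)) * star (Tt ψ a a' b b' c c') with hA3T
  set A4T := fun (a a' : A) (b b' : B) (c c' : C) =>
    ψ (a,(b',c')) * ψ (a',(b,c)) * star (Tt ψ a a' b b' c c') with hA4T
  have e1 : S6 (fun a a' b b' c c' => Tt ψ a a' b b' c c' * star (Tt ψ a a' b b' c c'))
      = S6 A1T - S6 A2T - S6 A3T + S6 A4T := by
    rw [← S6_comb]
    exact S6_congr _ _ fun a a' b b' c c' => by
      simp only [hA1T, hA2T, hA3T, hA4T]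
      unfold Tt
      ring
  have e2 : S6 A2T = - S6 A1T := by
    rw [← S6_swapB A2T]
    rw [show (fun a a' b b' c c' => A2T a a' b' b c c')
        = fun a a' b b' c c' => - A1T a a' b b' c c' by
      funext a a' b b' c c'
      simp only [hA1T, hA2T]
      rw [Tt_swapB ψ a a' b b' c c', star_neg, mul_neg]]
    exact S6_neg A1T
  have e3 : S6 A3T = - S6 A1T := by
    rw [← S6_swapC A3T]
    rw [show (fun a a' b b' c c' => A3T a a' b b' c' c)
        = fun a a' b b' c c' => - A1T a a' b b' c c' by
      funext a a' b b' c c'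
      simp only [hA1T, hA3T]
      rw [Tt_swapC ψ a a' b b' c c', star_neg, mul_neg]]
    exact S6_neg A1T
  have e4 : S6 A4T = S6 A1T := by
    rw [← S6_swapB A4T]
    rw [show (fun a a' b b' c c' => A4T a a' b' b c c')
        = fun a a' b b' c c' => - A3T a a' b b' c c' by
      funext a a' b b' c c'
      simp only [hA3T, hA4T]
      rw [Tt_swapB ψ a a' b b' c c', star_neg, mul_neg]]
    rw [S6_neg A3T, e3, neg_neg]
  have e5 : S6 A1T
      = S6 (fun a a' b b' c c' =>
            ψ (a,(b,c)) * star (ψ (a,(b,c))) * (ψ (a',(b',c')) * star (ψ (a',(b',c')))))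
        - S6 (fun a a' b b' c c' =>
            ψ (a,(b,c)) * star (ψ (a,(b',c))) * (ψ (a',(b',c')) * star (ψ (a',(b,c')))))
        - S6 (fun a a' b b' c c' =>
            ψ (a,(b,c)) * star (ψ (a,(b,c'))) * (ψ (a',(b',c')) * star (ψ (a',(b',c)))))
        + S6 (fun a a' b b' c c' =>
            ψ (a,(b,c)) * star (ψ (a,(b',c'))) * (ψ (a',(b',c')) * star (ψ (a',(b,c))))) := by
    rw [← S6_comb]
    exact S6_congr _ _ fun a a' b b' c c' => by
      simp only [hA1T, Tt, star_sub, star_add, star_mul']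
      ring
  rw [e1, e2, e3, e4, e5, canonN, canonB, canonC, canonBC]
  ring

end Stmt7Aux

/-- For a tripartite pure state, `1 + Tr((ρ^{BC})²) ≥ Tr((ρ^B)²) + Tr((ρ^C)²)`,
and hence the tripartite tangle dominates the bipartite tangle across `A|BC`:
`3 − Tr((ρ^A)²) − Tr((ρ^B)²) − Tr((ρ^C)²) ≥ 2 − Tr((ρ^A)²) − Tr((ρ^{BC})²)`. -/
theorem stmt7 {A B C : Type*} [Fintype A] [Fintype B] [Fintype C]
    (ψ : A × (B × C) → ℂ) (hψ : ∑ x, ‖ψ x‖ ^ 2 = 1) :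
    1 + purity (ptraceA (outerProd ψ)) ≥
      purity (ptraceB (ptraceA (outerProd ψ))) + purity (ptraceA (ptraceA (outerProd ψ))) ∧
    3 - purity (ptraceB (outerProd ψ)) - purity (ptraceB (ptraceA (outerProd ψ)))
        - purity (ptraceA (ptraceA (outerProd ψ))) ≥
      2 - purity (ptraceB (outerProd ψ)) - purity (ptraceA (outerProd ψ)) := by
  have hN : (∑ x, ψ x * star (ψ x)) = 1 := by
    have h1 : ∀ x, ψ x * star (ψ x) = ((‖ψ x‖ ^ 2 : ℝ) : ℂ) := fun x => by
      rw [Complex.star_def, Complex.mul_conj]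
      norm_cast
      rw [Complex.normSq_eq_norm_sq]
    rw [Finset.sum_congr rfl fun x _ => h1 x, ← Complex.ofReal_sum, hψ, Complex.ofReal_one]
  have hkey := Stmt7Aux.key ψ
  rw [hN, one_pow] at hkey
  have hpos : 0 ≤ (Stmt7Aux.S6 (fun a a' b b' c c' =>
      Stmt7Aux.Tt ψ a a' b b' c c' * star (Stmt7Aux.Tt ψ a a' b b' c c'))).re := by
    unfold Stmt7Aux.S6
    simp only [Complex.star_def, Complex.mul_conj, Complex.re_sum, Complex.ofReal_re]
    exact Finset.sum_nonneg fun _ _ => Finset.sum_nonneg fun _ _ =>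
      Finset.sum_nonneg fun _ _ => Finset.sum_nonneg fun _ _ =>
      Finset.sum_nonneg fun _ _ => Finset.sum_nonneg fun _ _ => Complex.normSq_nonneg _
  have hre := congrArg Complex.re hkey
  simp only [Complex.mul_re, Complex.add_re, Complex.sub_re, Complex.one_re,
    Complex.add_im, Complex.sub_im, Complex.one_im, Complex.re_ofNat, Complex.im_ofNat] at hre
  rw [hre] at hpos
  unfold purity
  constructor
  · linarith
  · linarith
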